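/- Let Λ be an r × n matrix with nonnegative real entries (r ≤ n) and X = diag(x_1,…,x_n). Then per(ΛX) = ∑_{S ⊆ [n], |S|=r} per(Λ↾S)·∏_{i∈S} x_i, and per(ΛX) is nonvanishing on H^n or identically zero; in particular, if some r × r submatrix of Λ has positive permanent, then per(ΛX) ≠ 0 whenever Re(x_i) > 0 for all i. -/

import Mathlib

noncomputable def perRect {r n : ℕ} (M : Matrix (Fin r) (Fin n) ℂ) : ℂ :=
  ∑ f : Fin r ↪ Fin n, ∏ i, M i (f i)

noncomputable def perSq {r : ℕ} (M : Matrix (Fin r) (Fin r) ℝ) : ℝ :=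
  ∑ σ : Equiv.Perm (Fin r), ∏ i, M i (σ i)

open Finset

namespace S19

noncomputable def Pf {r n : ℕ} (Λ : Matrix (Fin r) (Fin n) ℝ) (x : Fin n → ℂ) : ℂ :=
  ∑ f : Fin r ↪ Fin n, ∏ i, (Λ i (f i) : ℂ) * x (f i)

noncomputable def perTot {r n : ℕ} (Λ : Matrix (Fin r) (Fin n) ℝ) : ℝ :=
  ∑ f : Fin r ↪ Fin n, ∏ i, Λ i (f i)

def NN {r n : ℕ} (Λ : Matrix (Fin r) (Fin n) ℝ) : Prop := ∀ i j, 0 ≤ Λ i j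

lemma exists_pos_of_sum_pos {ι : Type*} [Fintype ι] {g : ι → ℝ} (hg : ∀ i, 0 ≤ g i)
    (h : 0 < ∑ i, g i) : ∃ i, 0 < g i := by
  by_contra hc
  push_neg at hc
  have : ∑ i : ι, g i = 0 :=
    le_antisymm (Finset.sum_nonpos fun i _ => hc i) (Finset.sum_nonneg fun i _ => hg i)
  rw [this] at h; exact lt_irrefl _ h

lemma perTot_nonneg {r n : ℕ} {Λ : Matrix (Fin r) (Fin n) ℝ} (hΛ : NN Λ) : 0 ≤ perTot Λ :=
  Finset.sum_nonneg fun f _ => Finset.prod_nonneg fun i _ => hΛ i (f i)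

lemma exists_emb_pos {r n : ℕ} {Λ : Matrix (Fin r) (Fin n) ℝ} (hΛ : NN Λ)
    (h : 0 < perTot Λ) : ∃ f : Fin r ↪ Fin n, 0 < ∏ i, Λ i (f i) :=
  exists_pos_of_sum_pos (fun f => Finset.prod_nonneg fun i _ => hΛ i (f i)) h

lemma perTot_pos_of_emb {r n : ℕ} {Λ : Matrix (Fin r) (Fin n) ℝ} (hΛ : NN Λ)
    (f : Fin r ↪ Fin n) (hf : 0 < ∏ i, Λ i (f i)) : 0 < perTot Λ :=
  lt_of_lt_of_le hf (Finset.single_le_sum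
    (fun g _ => Finset.prod_nonneg fun i _ => hΛ i (g i)) (Finset.mem_univ f))

lemma factor_pos {r n : ℕ} {Λ : Matrix (Fin r) (Fin n) ℝ} (hΛ : NN Λ)
    {f : Fin r ↪ Fin n} (hf : 0 < ∏ i, Λ i (f i)) (i : Fin r) : 0 < Λ i (f i) := by
  rcases lt_or_eq_of_le (hΛ i (f i)) with h | h
  · exact h
  · exfalso
    have : ∏ i', Λ i' (f i') = 0 := Finset.prod_eq_zero (Finset.mem_univ i) h.symm
    rw [this] at hf; exact lt_irrefl _ hf

lemma Pf_eq_zero {r n : ℕ} {Λ : Matrix (Fin r) (Fin n) ℝ} (hΛ : NN Λ)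
    (h : perTot Λ = 0) (x : Fin n → ℂ) : Pf Λ x = 0 := by
  have hz : ∀ f : Fin r ↪ Fin n, ∏ i, Λ i (f i) = 0 := by
    intro f
    have := (Finset.sum_eq_zero_iff_of_nonneg
      (fun g (_ : g ∈ Finset.univ) => Finset.prod_nonneg fun i _ => hΛ i (g i))).mp h
    exact this f (Finset.mem_univ f)
  rw [Pf]
  apply Finset.sum_eq_zero
  intro f _
  rw [Finset.prod_mul_distrib]
  have : ∏ i, (Λ i (f i) : ℂ) = ((∏ i, Λ i (f i) : ℝ) : ℂ) := by push_cast; ring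
  rw [this, hz f]
  simp

lemma Pf_zero_rows {n : ℕ} (Λ : Matrix (Fin 0) (Fin n) ℝ) (x : Fin n → ℂ) : Pf Λ x = 1 := by
  haveI : Unique (Fin 0 ↪ Fin n) :=
    { default := Function.Embedding.ofIsEmpty
      uniq := fun f => by ext i; exact i.elim0 }
  rw [Pf, Fintype.sum_unique]
  simp

lemma perTot_zero_cols {r : ℕ} (Λ : Matrix (Fin (r+1)) (Fin 0) ℝ) : perTot Λ = 0 := by
  haveI : IsEmpty (Fin (r+1) ↪ Fin 0) := ⟨fun f => (f 0).elim0⟩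
  rw [perTot, Finset.univ_eq_empty, Finset.sum_empty]

lemma re_inv_nonneg {z : ℂ} (h : 0 ≤ z.re) : 0 ≤ (z⁻¹).re := by
  rw [Complex.inv_re]; exact div_nonneg h (Complex.normSq_nonneg z)

lemma ne_zero_of_re_pos {z : ℂ} (h : 0 < z.re) : z ≠ 0 := by
  intro h0; rw [h0] at h; simp at h

lemma re_inv_pos {z : ℂ} (h : 0 < z.re) : 0 < (z⁻¹).re := by
  rw [Complex.inv_re]
  exact div_pos h (Complex.normSq_pos.mpr (ne_zero_of_re_pos h))


variable {r m : ℕ}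

noncomputable def consFun (i : Fin (r+1)) (j : Fin (m+1)) (g : Fin r ↪ Fin m) :
    Fin (r+1) → Fin (m+1) :=
  @Fin.insertNth r (fun _ => Fin (m+1)) i j (fun k => j.succAbove (g k))

@[simp] lemma consFun_same (i : Fin (r+1)) (j : Fin (m+1)) (g : Fin r ↪ Fin m) :
    consFun i j g i = j := @Fin.insertNth_apply_same r (fun _ => Fin (m+1)) i j (fun k => j.succAbove (g k))

@[simp] lemma consFun_succAbove (i : Fin (r+1)) (j : Fin (m+1)) (g : Fin r ↪ Fin m)
    (k : Fin r) : consFun i j g (i.succAbove k) = j.succAbove (g k) :=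
  @Fin.insertNth_apply_succAbove r (fun _ => Fin (m+1)) i j (fun k => j.succAbove (g k)) k

noncomputable def consEmb (i : Fin (r+1)) (j : Fin (m+1)) (g : Fin r ↪ Fin m) :
    Fin (r+1) ↪ Fin (m+1) :=
  ⟨consFun i j g, by
    have hval : ∀ a : Fin (r+1), a ≠ i →
        ∃ k, a = i.succAbove k ∧ consFun i j g a = j.succAbove (g k) := by
      intro a ha
      obtain ⟨k, hk⟩ := Fin.exists_succAbove_eq ha
      refine ⟨k, hk.symm, ?_⟩
      rw [← hk]
      exact consFun_succAbove i j g k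
    intro a b hab
    by_cases ha : a = i <;> by_cases hb : b = i
    · rw [ha, hb]
    · exfalso
      subst ha
      obtain ⟨k, _, hbv⟩ := hval b hb
      rw [consFun_same, hbv] at hab
      exact Fin.succAbove_ne j (g k) hab.symm
    · exfalso
      subst hb
      obtain ⟨k, _, hav⟩ := hval a ha
      rw [consFun_same, hav] at hab
      exact Fin.succAbove_ne j (g k) hab
    · obtain ⟨k, hk, hav⟩ := hval a ha
      obtain ⟨l, hl, hbv⟩ := hval b hb
      rw [hav, hbv] at hab
      rw [hk, hl]
      congr 1
      exact g.injective (Fin.succAbove_right_injective hab)⟩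

@[simp] lemma consEmb_same (i : Fin (r+1)) (j : Fin (m+1)) (g : Fin r ↪ Fin m) :
    consEmb i j g i = j := consFun_same i j g

@[simp] lemma consEmb_succAbove (i : Fin (r+1)) (j : Fin (m+1)) (g : Fin r ↪ Fin m)
    (k : Fin r) : consEmb i j g (i.succAbove k) = j.succAbove (g k) :=
  consFun_succAbove i j g k

lemma emb_decomp (f : Fin (r+1) ↪ Fin (m+1)) (i : Fin (r+1)) :
    ∃ g : Fin r ↪ Fin m, f = consEmb i (f i) g := by
  have h : ∀ k : Fin r, ∃ z, (f i).succAbove z = f (i.succAbove k) := fun k =>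
    Fin.exists_succAbove_eq (f.injective.ne (Fin.succAbove_ne i k))
  choose g0 hg0 using h
  have hginj : Function.Injective g0 := by
    intro a b hab
    have : f (i.succAbove a) = f (i.succAbove b) := by rw [← hg0, ← hg0, hab]
    exact Fin.succAbove_right_injective (f.injective this)
  refine ⟨⟨g0, hginj⟩, ?_⟩
  ext a
  rcases eq_or_ne a i with rfl | ha
  · simp
  · obtain ⟨k, hk⟩ := Fin.exists_succAbove_eq ha
    rw [← hk]
    simp [hg0]

lemma emb_inj_aux {i : Fin (r+1)} {j j' : Fin (m+1)} {g g' : Fin r ↪ Fin m}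
    (h : consEmb i j g = consEmb i j' g') : j = j' ∧ g = g' := by
  have hj : j = j' := by
    have := congrArg (fun F : Fin (r+1) ↪ Fin (m+1) => F i) h
    simpa using this
  subst hj
  refine ⟨rfl, ?_⟩
  have hg : ∀ k, g k = g' k := by
    intro k
    have := congrArg (fun F : Fin (r+1) ↪ Fin (m+1) => F (i.succAbove k)) h
    simp only [consEmb_succAbove] at this
    exact Fin.succAbove_right_injective this
  exact DFunLike.ext g g' hg

lemma sum_emb_row {M : Type*} [AddCommMonoid M] (i : Fin (r+1))
    (F : (Fin (r+1) ↪ Fin (m+1)) → M) :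
    ∑ f, F f = ∑ j : Fin (m+1), ∑ g : Fin r ↪ Fin m, F (consEmb i j g) := by
  rw [← Finset.sum_product']
  symm
  apply Finset.sum_bij (i := fun (p : Fin (m+1) × (Fin r ↪ Fin m)) _ => consEmb i p.1 p.2)
  · intro a _; exact Finset.mem_univ _
  · rintro ⟨j, g⟩ _ ⟨j', g'⟩ _ h
    obtain ⟨h1, h2⟩ := emb_inj_aux h
    rw [Prod.mk.injEq]; exact ⟨h1, h2⟩
  · intro f _
    obtain ⟨g, hg⟩ := emb_decomp f i
    exact ⟨(f i, g), Finset.mem_univ _, hg.symm⟩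
  · intro a _; rfl



lemma sum_emb_col {M : Type*} [AddCommMonoid M] (j : Fin (m+1))
    (F : (Fin (r+1) ↪ Fin (m+1)) → M) :
    ∑ f, F f = (∑ g : Fin (r+1) ↪ Fin m, F (g.trans j.succAboveEmb))
      + ∑ i : Fin (r+1), ∑ g : Fin r ↪ Fin m, F (consEmb i j g) := by
  classical
  rw [← Finset.sum_filter_add_sum_filter_not Finset.univ (fun f => ∀ a, f a ≠ j)]
  congr 1
  · symm
    apply Finset.sum_bij (i := fun (g : Fin (r+1) ↪ Fin m) _ => g.trans j.succAboveEmb)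
    · intro g _
      simp only [Finset.mem_filter, Finset.mem_univ, true_and]
      intro a
      exact Fin.succAbove_ne j (g a)
    · intro g _ g' _ h
      ext k
      have := congrArg (fun F : Fin (r+1) ↪ Fin (m+1) => F k) h
      simp only [Function.Embedding.trans_apply, Fin.succAboveEmb_apply] at this
      exact congrArg Fin.val (Fin.succAbove_right_injective this)
    · intro f hf
      simp only [Finset.mem_filter, Finset.mem_univ, true_and] at hf
      have h : ∀ k : Fin (r+1), ∃ z, j.succAbove z = f k := fun k =>
        Fin.exists_succAbove_eq (hf k)
      choose g0 hg0 using h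
      have hginj : Function.Injective g0 := by
        intro a b hab
        have : f a = f b := by rw [← hg0, ← hg0, hab]
        exact f.injective this
      refine ⟨⟨g0, hginj⟩, Finset.mem_univ _, ?_⟩
      ext a
      simp [hg0]
    · intro a _; rfl
  · rw [← Finset.sum_product']
    symm
    apply Finset.sum_bij (i := fun (p : Fin (r+1) × (Fin r ↪ Fin m)) _ => consEmb p.1 j p.2)
    · rintro ⟨i, g⟩ _
      simp only [Finset.mem_filter, Finset.mem_univ, true_and]
      push_neg
      exact ⟨i, by simp⟩
    · rintro ⟨i, g⟩ _ ⟨i', g'⟩ _ h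
      have hi : i = i' := by
        by_contra hii
        obtain ⟨k, hk⟩ := Fin.exists_succAbove_eq hii
        have e1 := congrArg (fun F : Fin (r+1) ↪ Fin (m+1) => F i) h
        simp only [consEmb_same] at e1
        rw [← hk, consEmb_succAbove] at e1
        exact Fin.succAbove_ne j (g' k) e1.symm
      subst hi
      obtain ⟨_, h2⟩ := emb_inj_aux h
      exact congrArg (fun z => (i, z)) h2
    · intro f hf
      simp only [Finset.mem_filter, Finset.mem_univ, true_and] at hf
      push_neg at hf
      obtain ⟨i, hi⟩ := hf
      obtain ⟨g, hg⟩ := emb_decomp f i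
      rw [hi] at hg
      exact ⟨(i, g), Finset.mem_univ _, hg.symm⟩
    · intro a _; rfl


lemma Pf_row (Λ : Matrix (Fin (r+1)) (Fin (m+1)) ℝ) (x : Fin (m+1) → ℂ) (i : Fin (r+1)) :
    Pf Λ x = ∑ j, (Λ i j : ℂ) * x j *
      Pf (Λ.submatrix i.succAbove j.succAbove) (x ∘ j.succAbove) := by
  rw [Pf, sum_emb_row i]
  apply Finset.sum_congr rfl
  intro j _
  rw [Pf, Finset.mul_sum]
  apply Finset.sum_congr rfl
  intro g _
  rw [Fin.prod_univ_succAbove _ i]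
  simp only [consEmb_same, consEmb_succAbove, Matrix.submatrix_apply, Function.comp_apply]

lemma Pf_col (Λ : Matrix (Fin (r+1)) (Fin (m+1)) ℝ) (x : Fin (m+1) → ℂ) (j : Fin (m+1)) :
    Pf Λ x = Pf (Λ.submatrix id j.succAbove) (x ∘ j.succAbove)
      + x j * ∑ i : Fin (r+1), (Λ i j : ℂ) *
          Pf (Λ.submatrix i.succAbove j.succAbove) (x ∘ j.succAbove) := by
  rw [Pf, sum_emb_col j]
  refine congrArg₂ (· + ·) ?_ ?_
  · apply Finset.sum_congr rfl
    intro g _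
    rfl
  · rw [Finset.mul_sum]
    apply Finset.sum_congr rfl
    intro i _
    rw [Pf, Finset.mul_sum, Finset.mul_sum]
    apply Finset.sum_congr rfl
    intro g _
    rw [Fin.prod_univ_succAbove _ i]
    simp only [consEmb_same, consEmb_succAbove, Matrix.submatrix_apply, Function.comp_apply]
    ring


lemma subprod_pos {r m : ℕ} {Λ : Matrix (Fin (r+1)) (Fin (m+1)) ℝ} (hΛ : NN Λ)
    {f : Fin (r+1) ↪ Fin (m+1)} (hf : 0 < ∏ a, Λ a (f a)) (i : Fin (r+1))
    {g : Fin r ↪ Fin m} (hg : f = consEmb i (f i) g) :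
    0 < ∏ k, Λ (i.succAbove k) ((f i).succAbove (g k)) := by
  have hsplit : ∏ a, Λ a (f a)
      = Λ i (f i) * ∏ k, Λ (i.succAbove k) ((f i).succAbove (g k)) := by
    rw [Fin.prod_univ_succAbove (fun a => Λ a (f a)) i]
    congr 1
    apply Finset.prod_congr rfl
    intro k _
    congr 1
    conv_lhs => rw [hg]
    exact consEmb_succAbove i (f i) g k
  rcases lt_or_eq_of_le (Finset.prod_nonneg
      (fun k (_ : k ∈ Finset.univ) => hΛ (i.succAbove k) ((f i).succAbove (g k)))) with h | h
  · exact h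
  · exfalso
    rw [hsplit, ← h, mul_zero] at hf
    exact lt_irrefl _ hf

lemma perTot_subrow_pos {r n : ℕ} {Λ : Matrix (Fin (r+1)) (Fin n) ℝ} (hΛ : NN Λ)
    (h : 0 < perTot Λ) (i : Fin (r+1)) : 0 < perTot (Λ.submatrix i.succAbove id) := by
  obtain ⟨f, hf⟩ := exists_emb_pos hΛ h
  apply perTot_pos_of_emb (fun a b => hΛ _ _) (i.succAboveEmb.trans f)
  have hsplit : ∏ a, Λ a (f a)
      = Λ i (f i) * ∏ k, Λ (i.succAbove k) (f (i.succAbove k)) :=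
    Fin.prod_univ_succAbove (fun a => Λ a (f a)) i
  have hsub : (0:ℝ) < ∏ k, Λ (i.succAbove k) (f (i.succAbove k)) := by
    rcases lt_or_eq_of_le (Finset.prod_nonneg
        (fun k (_ : k ∈ Finset.univ) => hΛ (i.succAbove k) (f (i.succAbove k)))) with h' | h'
    · exact h'
    · exfalso; rw [hsplit, ← h', mul_zero] at hf; exact lt_irrefl _ hf
  convert hsub using 1
  rfl

lemma perTot_subrowcol_pos {r m : ℕ} {Λ : Matrix (Fin (r+1)) (Fin (m+1)) ℝ} (hΛ : NN Λ)
    {f : Fin (r+1) ↪ Fin (m+1)} (hf : 0 < ∏ a, Λ a (f a)) (i : Fin (r+1)) :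
    0 < perTot (Λ.submatrix i.succAbove (f i).succAbove) := by
  obtain ⟨g, hg⟩ := emb_decomp f i
  apply perTot_pos_of_emb (fun a b => hΛ _ _) g
  exact subprod_pos hΛ hf i hg

def SA (r n : ℕ) : Prop := ∀ (Λ : Matrix (Fin r) (Fin n) ℝ), NN Λ → 0 < perTot Λ →
  ∀ x : Fin n → ℂ, (∀ j, 0 < (x j).re) → Pf Λ x ≠ 0

def SB (r n : ℕ) : Prop := ∀ (Λ : Matrix (Fin (r+1)) (Fin n) ℝ), NN Λ → 0 < perTot Λ →
  ∀ x : Fin n → ℂ, (∀ j, 0 < (x j).re) → ∀ i : Fin (r+1),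
  0 ≤ (Pf Λ x / Pf (Λ.submatrix i.succAbove id) x).re

def SC (r n : ℕ) : Prop := ∀ (Λ : Matrix (Fin r) (Fin (n+1)) ℝ), NN Λ → 0 < perTot Λ →
  ∀ j : Fin (n+1), 0 < perTot (Λ.submatrix id j.succAbove) →
  ∀ x : Fin (n+1) → ℂ, (∀ a, 0 < (x a).re) →
  0 < (Pf Λ x / (x j * Pf (Λ.submatrix id j.succAbove) (x ∘ j.succAbove))).re

lemma SA_zero (n : ℕ) : SA 0 n := by
  intro Λ _ _ x _
  rw [Pf_zero_rows]
  exact one_ne_zero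

lemma SC_zero (n : ℕ) : SC 0 n := by
  intro Λ _ _ j _ x hx
  rw [Pf_zero_rows, Pf_zero_rows, mul_one, one_div]
  exact re_inv_pos (hx j)


lemma submatrix_rc {r m : ℕ} (Λ : Matrix (Fin (r+1)) (Fin (m+1)) ℝ) (i : Fin (r+1))
    (j : Fin (m+1)) :
    (Λ.submatrix i.succAbove id).submatrix id j.succAbove
      = Λ.submatrix i.succAbove j.succAbove := by
  rw [Matrix.submatrix_submatrix]
  rfl

lemma term_re_nonneg {r m : ℕ} {Λ : Matrix (Fin (r+1)) (Fin (m+1)) ℝ} (hΛ : NN Λ)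
    (hpos : 0 < perTot Λ) {x : Fin (m+1) → ℂ} (hx : ∀ a, 0 < (x a).re)
    (i : Fin (r+1)) (j : Fin (m+1)) (hC : SC r m)
    (hm : 0 < perTot (Λ.submatrix i.succAbove j.succAbove)) :
    0 < (x j * Pf (Λ.submatrix i.succAbove j.succAbove) (x ∘ j.succAbove)
        / Pf (Λ.submatrix i.succAbove id) x).re := by
  have hM : NN (Λ.submatrix i.succAbove id) := fun a b => hΛ _ _
  have hMpos : 0 < perTot (Λ.submatrix i.succAbove id) := perTot_subrow_pos hΛ hpos i
  have hm' : 0 < perTot ((Λ.submatrix i.succAbove id).submatrix id j.succAbove) := by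
    rw [submatrix_rc]; exact hm
  have hw := hC (Λ.submatrix i.succAbove id) hM hMpos j hm' x hx
  rw [submatrix_rc] at hw
  have hz : x j * Pf (Λ.submatrix i.succAbove j.succAbove) (x ∘ j.succAbove)
      / Pf (Λ.submatrix i.succAbove id) x
      = (Pf (Λ.submatrix i.succAbove id) x
          / (x j * Pf (Λ.submatrix i.succAbove j.succAbove) (x ∘ j.succAbove)))⁻¹ := by
    rw [inv_div]
  rw [hz]
  exact re_inv_pos hw

lemma SB_of (r n : ℕ) (hC : ∀ m, n = m + 1 → SC r m) : SB r n := by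
  intro Λ hΛ hpos x hx i
  cases n with
  | zero =>
    exfalso
    rw [perTot_zero_cols] at hpos
    exact lt_irrefl _ hpos
  | succ m =>
    rw [Pf_row Λ x i, Finset.sum_div, Complex.re_sum]
    apply Finset.sum_nonneg
    intro j _
    rw [mul_assoc, mul_div_assoc, Complex.re_ofReal_mul]
    apply mul_nonneg (hΛ i j)
    rcases lt_or_eq_of_le (perTot_nonneg (Λ := Λ.submatrix i.succAbove j.succAbove)
        (fun a b => hΛ _ _)) with hm | hm
    · exact le_of_lt (term_re_nonneg hΛ hpos hx i j (hC m rfl) hm)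
    · have hz0 : Pf (Λ.submatrix i.succAbove j.succAbove) (x ∘ j.succAbove) = 0 :=
        Pf_eq_zero (Λ := Λ.submatrix i.succAbove j.succAbove) (fun a b => hΛ _ _) hm.symm _
      rw [hz0, mul_zero, zero_div]
      simp

lemma SA_succ (r n : ℕ) (hC : ∀ m, n = m + 1 → SC r m) : SA (r+1) n := by
  intro Λ hΛ hpos x hx
  obtain ⟨f, hf⟩ := exists_emb_pos hΛ hpos
  cases n with
  | zero => exact (f 0).elim0
  | succ m =>
    have hre : 0 < (Pf Λ x / Pf (Λ.submatrix (0 : Fin (r+1)).succAbove id) x).re := by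
      rw [Pf_row Λ x 0, Finset.sum_div, Complex.re_sum]
      apply Finset.sum_pos'
      · intro j _
        rw [mul_assoc, mul_div_assoc, Complex.re_ofReal_mul]
        apply mul_nonneg (hΛ 0 j)
        rcases lt_or_eq_of_le (perTot_nonneg (Λ := Λ.submatrix (0 : Fin (r+1)).succAbove j.succAbove)
            (fun a b => hΛ _ _)) with hm | hm
        · exact le_of_lt (term_re_nonneg hΛ hpos hx 0 j (hC m rfl) hm)
        · have hz0 : Pf (Λ.submatrix (Fin.succAbove 0) j.succAbove) (x ∘ j.succAbove) = 0 :=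
            Pf_eq_zero (Λ := Λ.submatrix (Fin.succAbove 0) j.succAbove)
              (fun a b => hΛ _ _) hm.symm _
          rw [hz0, mul_zero, zero_div]
          simp
      · refine ⟨f 0, Finset.mem_univ _, ?_⟩
        rw [mul_assoc, mul_div_assoc, Complex.re_ofReal_mul]
        apply mul_pos (factor_pos hΛ hf 0)
        exact term_re_nonneg hΛ hpos hx 0 (f 0) (hC m rfl) (perTot_subrowcol_pos hΛ hf 0)
    intro h0
    rw [h0, zero_div] at hre
    simp at hre

lemma SC_succ (r n : ℕ) (hA1 : SA (r+1) n) (hB : SB r n) : SC (r+1) n := by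
  intro Λ hΛ hpos j hpos' x hx
  set D := Pf (Λ.submatrix id j.succAbove) (x ∘ j.succAbove) with hD
  have hDne : D ≠ 0 :=
    hA1 (Λ.submatrix id j.succAbove) (fun a b => hΛ _ _) hpos' (x ∘ j.succAbove)
      (fun a => hx _)
  have hxj : x j ≠ 0 := ne_zero_of_re_pos (hx j)
  rw [Pf_col Λ x j, ← hD]
  set S := ∑ i : Fin (r+1), (Λ i j : ℂ) *
      Pf (Λ.submatrix i.succAbove j.succAbove) (x ∘ j.succAbove) with hS
  have hsplit : (D + x j * S) / (x j * D) = (x j)⁻¹ + S / D := by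
    field_simp
  rw [hsplit, Complex.add_re]
  have h1 : 0 < ((x j)⁻¹).re := re_inv_pos (hx j)
  have h2 : 0 ≤ (S / D).re := by
    rw [hS, Finset.sum_div, Complex.re_sum]
    apply Finset.sum_nonneg
    intro i _
    rw [mul_div_assoc, Complex.re_ofReal_mul]
    apply mul_nonneg (hΛ i j)
    have hw := hB (Λ.submatrix id j.succAbove) (fun a b => hΛ _ _) hpos'
      (x ∘ j.succAbove) (fun a => hx _) i
    have heq : (Λ.submatrix id j.succAbove).submatrix i.succAbove id
        = Λ.submatrix i.succAbove j.succAbove := by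
      rw [Matrix.submatrix_submatrix]
      rfl
    rw [heq] at hw
    have hz : Pf (Λ.submatrix i.succAbove j.succAbove) (x ∘ j.succAbove) / D
        = (D / Pf (Λ.submatrix i.succAbove j.succAbove) (x ∘ j.succAbove))⁻¹ := by
      rw [inv_div]
    rw [hz]
    exact re_inv_nonneg hw
  linarith

theorem key (N : ℕ) : (∀ r n, r + n ≤ N → SA r n) ∧ (∀ r n, r + 1 + n ≤ N → SB r n)
    ∧ (∀ r n, r + n + 1 ≤ N → SC r n) := by
  induction N with
  | zero =>
    refine ⟨?_, ?_, ?_⟩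
    · intro r n h
      have hr : r = 0 := by omega
      subst hr
      exact SA_zero n
    · intro r n h; omega
    · intro r n h; omega
  | succ N IH =>
    obtain ⟨IA, IB, IC⟩ := IH
    refine ⟨?_, ?_, ?_⟩
    · intro r n h
      cases r with
      | zero => exact SA_zero n
      | succ r' =>
        apply SA_succ
        intro m hm
        apply IC
        omega
    · intro r n h
      apply SB_of
      intro m hm
      apply IC
      omega
    · intro r n h
      cases r with
      | zero => exact SC_zero n
      | succ r' =>
        apply SC_succ
        · apply IA; omega
        · apply IB; omega


lemma perRect_eq {r n : ℕ} (Λ : Matrix (Fin r) (Fin n) ℝ) (x : Fin n → ℂ) :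
    perRect (Λ.map (fun a => (a : ℂ)) * Matrix.diagonal x) = Pf Λ x := by
  rw [perRect, Pf]
  apply Finset.sum_congr rfl
  intro f _
  apply Finset.prod_congr rfl
  intro i _
  rw [Matrix.mul_diagonal, Matrix.map_apply]

noncomputable def embOf {n r : ℕ} (S : Finset (Fin n)) (hS : S.card = r)
    (σ : Equiv.Perm (Fin r)) : Fin r ↪ Fin n :=
  ⟨fun i => S.orderEmbOfFin hS (σ i), by
    intro a b h
    exact σ.injective ((S.orderEmbOfFin hS).injective h)⟩

lemma image_embOf {n r : ℕ} (S : Finset (Fin n)) (hS : S.card = r) (σ : Equiv.Perm (Fin r)) :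
    Finset.image (embOf S hS σ) Finset.univ = S := by
  ext a
  simp only [Finset.mem_image, Finset.mem_univ, true_and]
  constructor
  · rintro ⟨i, rfl⟩
    exact Finset.orderEmbOfFin_mem S hS (σ i)
  · intro ha
    have : a ∈ Set.range ⇑(S.orderEmbOfFin hS) := by
      rw [Finset.range_orderEmbOfFin]
      exact Finset.mem_coe.mpr ha
    obtain ⟨k, hk⟩ := this
    exact ⟨σ.symm k, by show S.orderEmbOfFin hS (σ (σ.symm k)) = a; simp [hk]⟩

lemma sum_emb_subsets {r n : ℕ} {M : Type*} [AddCommMonoid M] (F : (Fin r ↪ Fin n) → M) :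
    ∑ f : Fin r ↪ Fin n, F f
      = ∑ S ∈ (Finset.powersetCard r (Finset.univ : Finset (Fin n))).attach,
          ∑ σ : Equiv.Perm (Fin r), F (embOf S.1 (Finset.mem_powersetCard.mp S.2).2 σ) := by
  classical
  rw [← Finset.sum_product']
  symm
  apply Finset.sum_bij (i := fun (p : {x // x ∈ Finset.powersetCard r (Finset.univ : Finset (Fin n))} × Equiv.Perm (Fin r)) _ =>
    embOf p.1.1 (Finset.mem_powersetCard.mp p.1.2).2 p.2)
  · intro p _
    exact Finset.mem_univ _
  · rintro ⟨⟨S, hSm⟩, σ⟩ _ ⟨⟨S', hSm'⟩, σ'⟩ _ h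
    have hS : S = S' := by
      rw [← image_embOf S (Finset.mem_powersetCard.mp hSm).2 σ,
        ← image_embOf S' (Finset.mem_powersetCard.mp hSm').2 σ']
      rw [h]
    subst hS
    have hσ : σ = σ' := by
      apply Equiv.ext
      intro i
      have := congrArg (fun F : Fin r ↪ Fin n => F i) h
      simp only [embOf, Function.Embedding.coeFn_mk] at this
      exact (S.orderEmbOfFin (Finset.mem_powersetCard.mp hSm).2).injective this
    subst hσ
    rfl
  · intro f _
    set S := Finset.image f Finset.univ with hSdef
    have hcard : S.card = r := by
      rw [hSdef, Finset.card_image_of_injective _ f.injective, Finset.card_univ,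
        Fintype.card_fin]
    have hmem : S ∈ Finset.powersetCard r (Finset.univ : Finset (Fin n)) :=
      Finset.mem_powersetCard.mpr ⟨Finset.subset_univ S, hcard⟩
    have hex : ∀ i : Fin r, ∃ k, S.orderEmbOfFin hcard k = f i := by
      intro i
      have : f i ∈ Set.range ⇑(S.orderEmbOfFin hcard) := by
        rw [Finset.range_orderEmbOfFin]
        exact Finset.mem_coe.mpr (Finset.mem_image_of_mem f (Finset.mem_univ i))
      exact this
    choose σ0 hσ0 using hex
    have hinj : Function.Injective σ0 := by
      intro a b hab
      apply f.injective
      rw [← hσ0, ← hσ0, hab]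
    have hbij : Function.Bijective σ0 := (Finite.injective_iff_bijective).mp hinj
    refine ⟨(⟨S, hmem⟩, Equiv.ofBijective σ0 hbij), Finset.mem_univ _, ?_⟩
    exact DFunLike.ext _ _ hσ0
  · intro p _
    rfl

lemma prod_ord {r n : ℕ} (S : Finset (Fin n)) (hS : S.card = r) (x : Fin n → ℂ) :
    ∏ k, x (S.orderEmbOfFin hS k) = ∏ a ∈ S, x a := by
  apply Finset.prod_bij (i := fun k _ => S.orderEmbOfFin hS k)
  · intro k _
    exact Finset.orderEmbOfFin_mem S hS k
  · intro a _ b _ hab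
    exact (S.orderEmbOfFin hS).injective hab
  · intro a ha
    have : a ∈ Set.range ⇑(S.orderEmbOfFin hS) := by
      rw [Finset.range_orderEmbOfFin]
      exact Finset.mem_coe.mpr ha
    obtain ⟨k, hk⟩ := this
    exact ⟨k, Finset.mem_univ k, hk⟩
  · intro k _
    rfl

lemma part1 {r n : ℕ} (Λ : Matrix (Fin r) (Fin n) ℝ) (x : Fin n → ℂ) :
    Pf Λ x = ∑ S ∈ (Finset.powersetCard r (Finset.univ : Finset (Fin n))).attach,
        ((perSq (Λ.submatrix id ⇑(S.1.orderEmbOfFin (Finset.mem_powersetCard.mp S.2).2)) : ℂ)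
          * ∏ i ∈ S.1, x i) := by
  rw [Pf, sum_emb_subsets]
  apply Finset.sum_congr rfl
  intro S _
  have hS := (Finset.mem_powersetCard.mp S.2).2
  calc ∑ σ : Equiv.Perm (Fin r), ∏ i, (Λ i (embOf S.1 hS σ i) : ℂ) * x (embOf S.1 hS σ i)
      = ∑ σ : Equiv.Perm (Fin r),
          (∏ i, (Λ i (S.1.orderEmbOfFin hS (σ i)) : ℂ)) * ∏ a ∈ S.1, x a := by
        apply Finset.sum_congr rfl
        intro σ _
        rw [Finset.prod_mul_distrib]
        congr 1
        calc ∏ i, x (S.1.orderEmbOfFin hS (σ i))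
            = ∏ i, x (S.1.orderEmbOfFin hS i) :=
              Equiv.prod_comp σ (fun k => x (S.1.orderEmbOfFin hS k))
          _ = ∏ a ∈ S.1, x a := prod_ord S.1 hS x
    _ = (∑ σ : Equiv.Perm (Fin r), ∏ i, (Λ i (S.1.orderEmbOfFin hS (σ i)) : ℂ))
          * ∏ a ∈ S.1, x a := by rw [← Finset.sum_mul]
    _ = ((perSq (Λ.submatrix id ⇑(S.1.orderEmbOfFin hS)) : ℝ) : ℂ) * ∏ a ∈ S.1, x a := by
        congr 1
        rw [perSq]
        push_cast
        rfl

lemma perTot_pos_of_perSq {r n : ℕ} {Λ : Matrix (Fin r) (Fin n) ℝ} (hΛ : NN Λ)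
    {S : Finset (Fin n)} {hS : S.card = r}
    (h : 0 < perSq (Λ.submatrix id ⇑(S.orderEmbOfFin hS))) : 0 < perTot Λ := by
  obtain ⟨σ, hσ⟩ := exists_pos_of_sum_pos
    (fun σ : Equiv.Perm (Fin r) => Finset.prod_nonneg
      (fun i (_ : i ∈ Finset.univ) => hΛ i (S.orderEmbOfFin hS (σ i)))) h
  exact perTot_pos_of_emb hΛ (embOf S hS σ) hσ

end S19

theorem stmt19 {r n : ℕ} (hrn : r ≤ n) (Λ : Matrix (Fin r) (Fin n) ℝ)
    (hΛ : ∀ i j, 0 ≤ Λ i j) :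
    (∀ x : Fin n → ℂ,
      perRect (Λ.map (fun a => (a : ℂ)) * Matrix.diagonal x) =
        ∑ S ∈ (Finset.powersetCard r (Finset.univ : Finset (Fin n))).attach,
          ((perSq (Λ.submatrix id ⇑(S.1.orderEmbOfFin (Finset.mem_powersetCard.mp S.2).2)) : ℂ)
            * ∏ i ∈ S.1, x i)) ∧
    ((∀ x : Fin n → ℂ, perRect (Λ.map (fun a => (a : ℂ)) * Matrix.diagonal x) = 0) ∨
      (∀ x : Fin n → ℂ, (∀ i, 0 < (x i).re) →
        perRect (Λ.map (fun a => (a : ℂ)) * Matrix.diagonal x) ≠ 0)) ∧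
    (∀ x : Fin n → ℂ, (∀ i, 0 < (x i).re) →
      (∃ S : Finset (Fin n), ∃ hS : S.card = r,
        0 < perSq (Λ.submatrix id ⇑(S.orderEmbOfFin hS))) →
      perRect (Λ.map (fun a => (a : ℂ)) * Matrix.diagonal x) ≠ 0) := by
  constructor
  · intro x
    rw [S19.perRect_eq, S19.part1]
  constructor
  · rcases lt_or_eq_of_le (S19.perTot_nonneg hΛ) with hpos | h0
    · right
      intro x hx
      rw [S19.perRect_eq]
      exact ((S19.key (r + n)).1 r n le_rfl) Λ hΛ hpos x hx
    · left
      intro x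
      rw [S19.perRect_eq]
      exact S19.Pf_eq_zero hΛ h0.symm x
  · rintro x hx ⟨S, hS, hpos⟩
    rw [S19.perRect_eq]
    exact ((S19.key (r + n)).1 r n le_rfl) Λ hΛ (S19.perTot_pos_of_perSq hΛ hpos) x hx
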